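/- Let Y be a locally convex Hausdorff topological vector space, D ⊂ Y a closed convex cone satisfying D = D^{++} (it equals its double polar), and H ⊂ D\(−D) a D-convex set that is countably compact in the topology σ(Y, D⁺) generated by the seminorms p_ξ(y) = |ξ(y)|, ξ ∈ D⁺. Then H + D is vectorially closed, i.e., vcl(H + D) = H + D. -/

import Mathlib

open Filter Topology Pointwise

/-- Vector closure of a set. -/
def vcl {Y : Type*} [AddCommGroup Y] [Module ℝ Y] (A : Set Y) : Set Y :=
  {y | ∃ v : Y, ∃ l : ℕ → ℝ, (∀ n, 0 ≤ l n) ∧ Tendsto l atTop (nhds 0) ∧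
    ∀ n, y + l n • v ∈ A}

theorem HplusD_vectorially_closed {Y : Type*} [AddCommGroup Y] [Module ℝ Y]
    [TopologicalSpace Y] [IsTopologicalAddGroup Y] [ContinuousSMul ℝ Y]
    [LocallyConvexSpace ℝ Y] [T2Space Y]
    (D H : Set Y)
    (hDcl : IsClosed D) (hDconv : Convex ℝ D)
    (hDcone : ∀ α : ℝ, 0 ≤ α → ∀ d ∈ D, α • d ∈ D)
    (hbipolar : D = {y : Y | ∀ ξ : Y →L[ℝ] ℝ, (∀ d ∈ D, 0 ≤ ξ d) → 0 ≤ ξ y})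
    (hH : H ⊆ D \ (-D)) (hconv : Convex ℝ (H + D))
    -- `H` is countably compact in the topology `σ(Y, D⁺)`:
    -- every sequence in `H` has a `σ(Y, D⁺)`-cluster point in `H`.
    (hcc : ∀ seq : ℕ → Y, (∀ n, seq n ∈ H) →
      ∃ h' ∈ H, ∀ s : Finset (Y →L[ℝ] ℝ), (∀ ξ ∈ s, ∀ d ∈ D, 0 ≤ ξ d) →
        ∀ ε : ℝ, 0 < ε → ∀ N : ℕ, ∃ n ≥ N, ∀ ξ ∈ s, |ξ (seq n) - ξ h'| < ε) :
    vcl (H + D) = H + D := by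
  apply Set.Subset.antisymm
  · intro y hy
    obtain ⟨v, l, hl0, hlt, hmem⟩ := hy
    -- decompose y + l n • v = hseq n + dseq n
    have hmem' : ∀ n, ∃ a ∈ H, ∃ b ∈ D, a + b = y + l n • v := fun n => hmem n
    choose hseq hhs dseq hds heq using hmem'
    obtain ⟨h', hh'H, hcl⟩ := hcc hseq hhs
    have hyh' : y - h' ∈ D := by
      rw [hbipolar]
      intro ξ hξ
      by_contra hneg
      push_neg at hneg
      have hξyh' : ξ y < ξ h' := by
        have := map_sub ξ y h'
        linarith [this ▸ hneg]
      set ε : ℝ := (ξ h' - ξ y) / 3 with hε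
      have hεpos : 0 < ε := by simp only [hε]; linarith
      -- choose N with |l n * ξ v| < ε for n ≥ N
      have htend : Tendsto (fun n => l n * ξ v) atTop (nhds 0) := by
        simpa using hlt.mul_const (ξ v)
      obtain ⟨N, hN⟩ := Metric.tendsto_atTop.mp htend ε hεpos
      obtain ⟨n, hnN, hcln⟩ := hcl {ξ} (by simpa using hξ) ε hεpos N
      have h1 : ξ (hseq n) + ξ (dseq n) = ξ y + l n * ξ v := by
        have := congrArg ξ (heq n)
        simpa [map_add, map_smul, smul_eq_mul] using this
      have h2 : 0 ≤ ξ (dseq n) := hξ _ (hds n)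
      have h3 : |ξ (hseq n) - ξ h'| < ε := hcln ξ (Finset.mem_singleton_self ξ)
      have h4 : |l n * ξ v| < ε := by
        have := hN n hnN
        rw [Real.dist_eq, sub_zero] at this; exact this
      have h5 : ξ h' - ε < ξ (hseq n) := by
        have := abs_lt.mp h3
        linarith [this.1, this.2]
      have h6 : l n * ξ v < ε := (abs_lt.mp h4).2
      linarith
    exact ⟨h', hh'H, y - h', hyh', by show h' + (y - h') = y; abel⟩
  · intro y hy
    exact ⟨0, fun _ => 0, fun _ => le_refl 0, tendsto_const_nhds, fun n => by
      simpa using hy⟩
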